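/- Let D = (A,B,λ) be an extremally matched temporal bi-clique with injective labeling λ, and let S be a bi-spanner of D with M⁻ ⊆ S and M⁺ ⊆ S. Then S is also a bi-spanner of the bi-clique (B,A,λ), i.e., every b ∈ B reaches every a ∈ A via a temporal path contained in S. -/

import Mathlib

/-!
Formalization framework for temporal graphs, temporal paths, spanners,
bi-spanners, and related notions from the paper on temporal spanners of
temporal cliques and bi-cliques.

A temporal graph on vertex type `V` is given by a labeling `lab : Sym2 V → L`
(only values on actual edges matter) together with an edge set
`E : Set (Sym2 V)`.  A temporal path is a nonempty list of vertices whose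
consecutive pairs are edges of the allowed edge set and whose labels are
non-decreasing along the path (non-strict temporal path).
-/

namespace TS

variable {V : Type} {L : Type} [LinearOrder L]

/-- The list of (undirected) edges traversed by a list of vertices. -/
def pathEdges (p : List V) : List (Sym2 V) :=
  (p.zip p.tail).map fun q => s(q.1, q.2)

/-- `p` is a temporal path using only edges from `S`, labelled by `lab`:
nonempty, all edges in `S`, labels non-decreasing along the path. -/
def IsTemporalPath (lab : Sym2 V → L) (S : Set (Sym2 V)) (p : List V) : Prop :=
  p ≠ [] ∧ (∀ e ∈ pathEdges p, e ∈ S) ∧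
    (pathEdges p).Chain' fun e f => lab e ≤ lab f

/-- `u` reaches `v` via a temporal path contained in `S`. -/
def Reaches (lab : Sym2 V → L) (S : Set (Sym2 V)) (u v : V) : Prop :=
  ∃ p : List V, p.head? = some u ∧ p.getLast? = some v ∧ IsTemporalPath lab S p

/-- Edge set of the complete graph on `V`. -/
def cliqueEdges (V : Type) : Set (Sym2 V) := {e | ¬ e.IsDiag}

/-- Edge set `A ⊗ B` of the complete bipartite graph with parts `α` and `β`. -/
def bicliqueEdges (α β : Type) : Set (Sym2 (α ⊕ β)) :=
  {e | ∃ a b, e = s(Sum.inl a, Sum.inr b)}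

/-- `S` is a spanner of the temporal graph with edge set `E`:
`S ⊆ E` and every vertex reaches every other vertex within `S`. -/
def IsSpanner (lab : Sym2 V → L) (E S : Set (Sym2 V)) : Prop :=
  S ⊆ E ∧ ∀ u v : V, Reaches lab S u v

/-- `S` is a bi-spanner of the temporal bi-clique with parts `α`, `β`:
`S ⊆ α ⊗ β` and every `a ∈ α` reaches every `b ∈ β` within `S`. -/
def IsBiSpanner {α β : Type} (lab : Sym2 (α ⊕ β) → L) (S : Set (Sym2 (α ⊕ β))) : Prop :=
  S ⊆ bicliqueEdges α β ∧ ∀ (a : α) (b : β), Reaches lab S (Sum.inl a) (Sum.inr b)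

/-- `σ_cl n`: the minimum number `m` such that every temporal clique on `n`
vertices admits a spanner with at most `m` edges. -/
noncomputable def sigmaCl (n : ℕ) : ℕ :=
  sInf {m | ∀ lab : Sym2 (Fin n) → ℕ, ∃ S : Finset (Sym2 (Fin n)),
    IsSpanner lab (cliqueEdges (Fin n)) (↑S) ∧ S.card ≤ m}

/-- `σ_bc n`: the minimum number `m` such that every temporal bi-clique with
`n` vertices on each side admits a bi-spanner with at most `m` edges. -/
noncomputable def sigmaBc (n : ℕ) : ℕ :=
  sInf {m | ∀ lab : Sym2 (Fin n ⊕ Fin n) → ℕ, ∃ S : Finset (Sym2 (Fin n ⊕ Fin n)),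
    IsBiSpanner lab (↑S) ∧ S.card ≤ m}

/-- `In(v,t)`: vertices reaching `v` via a temporal path (in edge set `E`)
all of whose labels are at most `t`. -/
def InSet (lab : Sym2 V → L) (E : Set (Sym2 V)) (v : V) (t : L) : Set V :=
  {u | ∃ p : List V, p.head? = some u ∧ p.getLast? = some v ∧
    IsTemporalPath lab E p ∧ ∀ e ∈ pathEdges p, lab e ≤ t}

/-- `Out(v,t)`: vertices that `v` reaches via a temporal path (in edge set `E`)
all of whose labels are at least `t`. -/
def OutSet (lab : Sym2 V → L) (E : Set (Sym2 V)) (v : V) (t : L) : Set V :=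
  {w | ∃ p : List V, p.head? = some v ∧ p.getLast? = some w ∧
    IsTemporalPath lab E p ∧ ∀ e ∈ pathEdges p, t ≤ lab e}

/-- `In(e)` for the edge `e = {u,v}`. -/
def InEdge (lab : Sym2 V → L) (E : Set (Sym2 V)) (u v : V) : Set V :=
  InSet lab E u (lab s(u, v)) ∪ InSet lab E v (lab s(u, v))

/-- `Out(e)` for the edge `e = {u,v}`. -/
def OutEdge (lab : Sym2 V → L) (E : Set (Sym2 V)) (u v : V) : Set V :=
  OutSet lab E u (lab s(u, v)) ∪ OutSet lab E v (lab s(u, v))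

variable {α β : Type}

/-- In a bi-clique, `b` is the earliest neighbor `π⁻(a)` of `a ∈ A`. -/
def IsEarliestNbrA (lab : Sym2 (α ⊕ β) → L) (a : α) (b : β) : Prop :=
  ∀ b' : β, lab s(Sum.inl a, Sum.inr b) ≤ lab s(Sum.inl a, Sum.inr b')

/-- In a bi-clique, `a` is the earliest neighbor `π⁻(b)` of `b ∈ B`. -/
def IsEarliestNbrB (lab : Sym2 (α ⊕ β) → L) (b : β) (a : α) : Prop :=
  ∀ a' : α, lab s(Sum.inl a, Sum.inr b) ≤ lab s(Sum.inl a', Sum.inr b)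

/-- In a bi-clique, `b` is the latest neighbor `π⁺(a)` of `a ∈ A`. -/
def IsLatestNbrA (lab : Sym2 (α ⊕ β) → L) (a : α) (b : β) : Prop :=
  ∀ b' : β, lab s(Sum.inl a, Sum.inr b') ≤ lab s(Sum.inl a, Sum.inr b)

/-- In a bi-clique, `a` is the latest neighbor `π⁺(b)` of `b ∈ B`. -/
def IsLatestNbrB (lab : Sym2 (α ⊕ β) → L) (b : β) (a : α) : Prop :=
  ∀ a' : α, lab s(Sum.inl a', Sum.inr b) ≤ lab s(Sum.inl a, Sum.inr b)

/-- The bi-clique is extremally matched: both the set `M⁻` of earliest edges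
and the set `M⁺` of latest edges form perfect matchings, i.e. the earliest-
(resp. latest-) neighbor maps of the two sides are mutually inverse. -/
def ExtremallyMatched (lab : Sym2 (α ⊕ β) → L) : Prop :=
  (∃ (f : α → β) (g : β → α),
    (∀ a, IsEarliestNbrA lab a (f a)) ∧ (∀ b, IsEarliestNbrB lab b (g b)) ∧
    (∀ a, g (f a) = a) ∧ (∀ b, f (g b) = b)) ∧
  (∃ (f : α → β) (g : β → α),
    (∀ a, IsLatestNbrA lab a (f a)) ∧ (∀ b, IsLatestNbrB lab b (g b)) ∧
    (∀ a, g (f a) = a) ∧ (∀ b, f (g b) = b))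

/-- `a ∈ A` is dismountable: there is `a' ≠ a` with
`λ({a, π⁻(a')}) ≤ λ({a', π⁻(a')})`. -/
def DismountableA (lab : Sym2 (α ⊕ β) → L) (a : α) : Prop :=
  ∃ (a' : α) (b : β), a' ≠ a ∧ IsEarliestNbrA lab a' b ∧
    lab s(Sum.inl a, Sum.inr b) ≤ lab s(Sum.inl a', Sum.inr b)

/-- `b ∈ B` is dismountable: there is `b' ≠ b` with
`λ({b', π⁺(b')}) ≤ λ({b, π⁺(b')})`. -/
def DismountableB (lab : Sym2 (α ⊕ β) → L) (b : β) : Prop :=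
  ∃ (b' : β) (a : α), b' ≠ b ∧ IsLatestNbrB lab b' a ∧
    lab s(Sum.inl a, Sum.inr b') ≤ lab s(Sum.inl a, Sum.inr b)

/-- The edge `{a', b'}` is `e`-reverted for `e = {a,b}`:
`λ({a', b}) ≤ λ({π⁺(b'), b})` or `λ({π⁻(a'), a}) ≤ λ({b', a})`. -/
def Reverted (lab : Sym2 (α ⊕ β) → L) (a : α) (b : β) (a' : α) (b' : β) : Prop :=
  (∃ a'' : α, IsLatestNbrB lab b' a'' ∧
    lab s(Sum.inl a', Sum.inr b) ≤ lab s(Sum.inl a'', Sum.inr b)) ∨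
  (∃ b'' : β, IsEarliestNbrA lab a' b'' ∧
    lab s(Sum.inl a, Sum.inr b'') ≤ lab s(Sum.inl a, Sum.inr b'))

/-- `M(e)`: the set of edges of the bi-clique that are *not* `e`-reverted,
for `e = {a,b}`. -/
def MSet (lab : Sym2 (α ⊕ β) → L) (a : α) (b : β) : Set (Sym2 (α ⊕ β)) :=
  {e | ∃ (a' : α) (b' : β), e = s(Sum.inl a', Sum.inr b') ∧ ¬ Reverted lab a b a' b'}

/-- `ind_{a}({a,b})`: the (1-based) rank of the edge `{a,b}` among the edges
incident to `a ∈ A`, ordered increasingly by label. -/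
def indA [Fintype β] (lab : Sym2 (α ⊕ β) → ℕ) (a : α) (b : β) : ℕ :=
  (Finset.univ.filter fun b' : β =>
    lab s(Sum.inl a, Sum.inr b') ≤ lab s(Sum.inl a, Sum.inr b)).card

/-- `ind_{b}({a,b})`: the (1-based) rank of the edge `{a,b}` among the edges
incident to `b ∈ B`, ordered increasingly by label. -/
def indB [Fintype α] (lab : Sym2 (α ⊕ β) → ℕ) (a : α) (b : β) : ℕ :=
  (Finset.univ.filter fun a' : α =>
    lab s(Sum.inl a', Sum.inr b) ≤ lab s(Sum.inl a, Sum.inr b)).card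

/-- Underlying symmetric label function of the shifted matching graph `SM_n`:
the edge `{a_i, b_j}` gets label `(j - i) mod n`. -/
def smFun (n : ℕ) : (Fin n ⊕ Fin n) → (Fin n ⊕ Fin n) → ℕ
  | Sum.inl i, Sum.inr j => (n + (j : ℕ) - (i : ℕ)) % n
  | Sum.inr j, Sum.inl i => (n + (j : ℕ) - (i : ℕ)) % n
  | _, _ => 0

theorem smFun_symm (n : ℕ) : ∀ x y, smFun n x y = smFun n y x := by
  rintro (i | i) (j | j) <;> rfl

/-- The labeling of the shifted matching graph `SM_n`. -/
def smLab (n : ℕ) : Sym2 (Fin n ⊕ Fin n) → ℕ :=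
  Sym2.lift ⟨smFun n, smFun_symm n⟩

end TS

namespace TS

variable {V : Type} {L : Type} [LinearOrder L]

lemma pathEdges_cons_cons (u v : V) (p : List V) :
    pathEdges (u :: v :: p) = s(u, v) :: pathEdges (v :: p) := rfl

lemma pathEdges_singleton (u : V) : pathEdges [u] = [] := rfl

lemma mem_of_getLast?' {l : List V} {a : V} (h : l.getLast? = some a) : a ∈ l := by
  obtain ⟨h', rfl⟩ := List.mem_getLast?_eq_getLast h
  exact List.getLast_mem h'

lemma pathEdges_append_singleton :
    ∀ (p : List V) (v : V), p.getLast? = some v → ∀ a : V,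
      pathEdges (p ++ [a]) = pathEdges p ++ [s(v, a)]
  | [], v, h, a => by simp at h
  | [x], v, h, a => by
      simp only [List.getLast?_singleton, Option.some.injEq] at h
      subst h; rfl
  | x :: y :: t, v, h, a => by
      rw [List.getLast?_cons_cons] at h
      have ih := pathEdges_append_singleton (y :: t) v h a
      simp only [List.cons_append] at ih ⊢
      rw [pathEdges_cons_cons, pathEdges_cons_cons, ih, List.cons_append]

lemma pathEdges_getLast :
    ∀ (p : List V) (v : V), p.getLast? = some v → pathEdges p ≠ [] →
      ∃ z, (pathEdges p).getLast? = some s(z, v)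
  | [], v, h, _ => by simp at h
  | [x], v, h, hne => absurd (pathEdges_singleton x) hne
  | x :: y :: t, v, h, hne => by
      rcases t with _ | ⟨w, t⟩
      · simp only [List.getLast?] at h ⊢
        exact ⟨x, by simp_all [pathEdges]⟩
      · have hlast : (y :: w :: t).getLast? = some v := by
          rw [← h]; rfl
        obtain ⟨z, hz⟩ := pathEdges_getLast (y :: w :: t) v hlast (by
          rw [pathEdges_cons_cons]; simp)
        refine ⟨z, ?_⟩
        have hrfl : pathEdges (x :: y :: w :: t) =
            s(x, y) :: s(y, w) :: pathEdges (w :: t) := rfl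
        rw [hrfl, List.getLast?_cons_cons]
        exact hz

/-- in an extremally matched bi-clique with injective labeling,
any bi-spanner `S` containing all earliest edges `M⁻` and all latest edges
`M⁺` is also a bi-spanner of the bi-clique with sides switched, i.e. every
`b ∈ B` reaches every `a ∈ A` via a temporal path in `S`. -/
theorem stmt7 {α β : Type} [Fintype α] [Fintype β]
    (lab : Sym2 (α ⊕ β) → ℕ) (hinj : Set.InjOn lab (bicliqueEdges α β))
    (hEM : ExtremallyMatched lab) (S : Set (Sym2 (α ⊕ β)))
    (hS : IsBiSpanner lab S)
    (hMm1 : ∀ (a : α) (b : β), IsEarliestNbrA lab a b → s(Sum.inl a, Sum.inr b) ∈ S)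
    (hMm2 : ∀ (b : β) (a : α), IsEarliestNbrB lab b a → s(Sum.inl a, Sum.inr b) ∈ S)
    (hMp1 : ∀ (a : α) (b : β), IsLatestNbrA lab a b → s(Sum.inl a, Sum.inr b) ∈ S)
    (hMp2 : ∀ (b : β) (a : α), IsLatestNbrB lab b a → s(Sum.inl a, Sum.inr b) ∈ S) :
    ∀ (b : β) (a : α), Reaches lab S (Sum.inr b) (Sum.inl a) := by
  obtain ⟨⟨fm, gm, hfm, hgm, hgfm, hfgm⟩, ⟨fp, gp, hfp, hgp, hgfp, hfgp⟩⟩ := hEM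
  intro b a
  set a₀ : α := gm b with ha₀
  set b₁ : β := fp a with hb₁
  have hE : IsEarliestNbrA lab a₀ b := by
    have := hfm a₀; rwa [ha₀, hfgm b] at this
  have hL : IsLatestNbrB lab b₁ a := by
    have := hgp b₁; rwa [hb₁, hgfp a] at this
  have he₀S : s(Sum.inl a₀, Sum.inr b) ∈ S := hMm2 b a₀ (hgm b)
  have he₁S : s(Sum.inl a, Sum.inr b₁) ∈ S := hMp1 a b₁ (hfp a)
  obtain ⟨p, hph, hpl, hpne, hpS, hpch⟩ := hS.2 a₀ b₁
  -- p starts with `inl a₀` and has at least two vertices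
  obtain ⟨t, rfl⟩ : ∃ t, p = Sum.inl a₀ :: t := by
    rcases p with _ | ⟨x, t⟩
    · simp at hph
    · simp at hph; exact ⟨t, by rw [hph]⟩
  obtain ⟨x, t, rfl⟩ : ∃ x t', t = x :: t' := by
    rcases t with _ | ⟨x, t'⟩
    · simp at hpl
    · exact ⟨x, t', rfl⟩
  have hql : (Sum.inr b :: Sum.inl a₀ :: x :: t).getLast? = some (Sum.inr b₁) := by
    rw [List.getLast?_cons_cons]; exact hpl
  have hsplit : pathEdges (Sum.inr b :: ((Sum.inl a₀ :: x :: t) ++ [Sum.inl a])) =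
      s(Sum.inr b, Sum.inl a₀) ::
        (pathEdges (Sum.inl a₀ :: x :: t) ++ [s(Sum.inr b₁, Sum.inl a)]) := by
    have h1 := pathEdges_append_singleton (Sum.inr b :: Sum.inl a₀ :: x :: t)
      (Sum.inr b₁) hql (Sum.inl a)
    simp only [List.cons_append] at h1 ⊢
    rw [h1, pathEdges_cons_cons, List.cons_append]
  have hEp : pathEdges (Sum.inl a₀ :: x :: t) = s(Sum.inl a₀, x) :: pathEdges (x :: t) :=
    rfl
  refine ⟨Sum.inr b :: ((Sum.inl a₀ :: x :: t) ++ [Sum.inl a]), rfl, ?_, ?_, ?_, ?_⟩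
  · rw [← List.cons_append, List.getLast?_concat]
  · simp
  · -- all edges in S
    intro e he
    rw [hsplit] at he
    simp only [List.mem_cons, List.mem_append, List.mem_singleton] at he
    rcases he with rfl | he | he
    · rwa [Sym2.eq_swap]
    · exact hpS _ he
    · rcases he with rfl | h
      · rw [Sym2.eq_swap]
        exact he₁S
      · simp at h
  · -- chain of labels
    rw [hsplit, List.Chain', List.isChain_cons, List.isChain_append]
    have hfirst : ∃ b', s(Sum.inl a₀, x) = s(Sum.inl a₀, Sum.inr b') := by
      have hmem : s(Sum.inl a₀, x) ∈ S := hpS _ (by rw [hEp]; simp)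
      obtain ⟨a', b', hab⟩ := hS.1 hmem
      rw [Sym2.eq_iff] at hab
      rcases hab with ⟨h1, h2⟩ | ⟨h1, h2⟩
      · exact ⟨b', by rw [h2]⟩
      · simp at h1
    refine ⟨?_, ?_, List.isChain_singleton _, ?_⟩
    · -- first edge bound
      intro y hy
      rw [hEp, List.cons_append, List.head?_cons, Option.mem_def,
        Option.some.injEq] at hy
      subst hy
      obtain ⟨b', hb'⟩ := hfirst
      rw [hb', show s(Sum.inr b, Sum.inl a₀) = s(Sum.inl a₀, Sum.inr b) from
        Sym2.eq_swap]
      exact hE b'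
    · exact hpch
    · -- last edge of p vs final edge
      intro y hy z hz
      simp only [List.head?_cons, Option.mem_def, Option.some.injEq] at hz
      obtain ⟨w, hw⟩ := pathEdges_getLast (Sum.inl a₀ :: x :: t) (Sum.inr b₁) hpl
        (by rw [hEp]; simp)
      rw [Option.mem_def, hw, Option.some.injEq] at hy
      subst hy
      subst hz
      rw [show s(Sum.inr b₁, Sum.inl a) = s(Sum.inl a, Sum.inr b₁) from
        Sym2.eq_swap]
      have hmem : s(w, Sum.inr b₁) ∈ S := hpS _ (mem_of_getLast?' hw)
      obtain ⟨a', b', hab⟩ := hS.1 hmem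
      rw [Sym2.eq_iff] at hab
      rcases hab with ⟨h1, h2⟩ | ⟨h1, h2⟩
      · rw [h1]
        exact hL a'
      · simp at h2

end TS
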